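/- Let G = SO₃(ℂ) act diagonally on V = 2R₂ = ℂ³ ⊕ ℂ³ (two copies of its standard representation). Then G' equals the image of O₃(ℂ) acting diagonally on ℂ³ ⊕ ℂ³. -/

import Mathlib

noncomputable section

/-- A function `V → ℂ` is a polynomial function if it lies in the subalgebra of
functions generated by the linear functionals, i.e. it is given by a polynomial
in linear coordinates. -/
def IsPolyFun {V : Type*} [AddCommGroup V] [Module ℂ V] (f : V → ℂ) : Prop :=
  f ∈ Algebra.adjoin ℂ (Set.range fun l : V →ₗ[ℂ] ℂ => (l : V → ℂ))

/-- Given a subgroup `G` of `GL(V)`, the group `G'` of all linear automorphisms of `V`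
preserving every `G`-invariant polynomial function on `V`. -/
def primeGroup {V : Type*} [AddCommGroup V] [Module ℂ V]
    (G : Subgroup (V ≃ₗ[ℂ] V)) : Subgroup (V ≃ₗ[ℂ] V) where
  carrier := {φ | ∀ f : V → ℂ, IsPolyFun f →
      (∀ g ∈ G, ∀ v : V, f (g v) = f v) → ∀ v : V, f (φ v) = f v}
  one_mem' := by intro f _ _ v; rfl
  mul_mem' := by
    intro a b ha hb f hf hinv v
    have h2 : f (a (b v)) = f (b v) := ha f hf hinv (b v)
    exact h2.trans (hb f hf hinv v)
  inv_mem' := by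
    intro a ha f hf hinv v
    have h := ha f hf hinv (a⁻¹ v)
    have : a (a⁻¹ v) = v := a.apply_symm_apply v
    rw [this] at h
    exact h.symm

/-- The algebraic exponential of an endomorphism of a finite-dimensional space
(intended for nilpotent endomorphisms, where the series is a finite sum). -/
def endExp {g : Type*} [AddCommGroup g] [Module ℂ g] [FiniteDimensional ℂ g]
    (A : Module.End ℂ g) : Module.End ℂ g :=
  ∑ k ∈ Finset.range (Module.finrank ℂ g + 1), (k.factorial : ℂ)⁻¹ • A ^ k

/-- The adjoint group `G = Aut(g)⁰` of a semisimple Lie algebra `g`: the subgroup of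
`GL(g)` generated by the exponentials of nilpotent inner derivations `ad x`. -/
def adjointGroup (g : Type*) [LieRing g] [LieAlgebra ℂ g] [FiniteDimensional ℂ g] :
    Subgroup (g ≃ₗ[ℂ] g) :=
  Subgroup.closure {u : g ≃ₗ[ℂ] g | ∃ x : g,
    IsNilpotent (LieAlgebra.ad ℂ g x) ∧ (u : g →ₗ[ℂ] g) = endExp (LieAlgebra.ad ℂ g x)}

/-- The subgroup of `GL(g)` fixing a subalgebra `t` pointwise. -/
def pointwiseStab {g : Type*} [LieRing g] [LieAlgebra ℂ g]
    (t : LieSubalgebra ℂ g) : Subgroup (g ≃ₗ[ℂ] g) where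
  carrier := {u | ∀ x ∈ t, u x = x}
  one_mem' := by intro x _; rfl
  mul_mem' := by
    intro a b ha hb x hx
    have : a (b x) = a x := by rw [hb x hx]
    exact this.trans (ha x hx)
  inv_mem' := by
    intro a ha x hx
    conv_lhs => rw [← ha x hx]
    exact a.symm_apply_apply x

/-- The maximal torus of the adjoint group corresponding to a Cartan subalgebra `t`:
the elements of the adjoint group acting trivially on `t`. -/
def maximalTorus (g : Type*) [LieRing g] [LieAlgebra ℂ g] [FiniteDimensional ℂ g]
    (t : LieSubalgebra ℂ g) : Subgroup (g ≃ₗ[ℂ] g) :=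
  adjointGroup g ⊓ pointwiseStab t

namespace Stmt15

/-- The standard nondegenerate quadratic form on `ℂ³`. -/
def q (v : Fin 3 → ℂ) : ℂ := v 0 ^ 2 + v 1 ^ 2 + v 2 ^ 2

/-- The orthogonal group `O₃(ℂ)` of the quadratic form `q`. -/
def O3 : Subgroup ((Fin 3 → ℂ) ≃ₗ[ℂ] (Fin 3 → ℂ)) where
  carrier := {φ | ∀ v, q (φ v) = q v}
  one_mem' := by intro v; rfl
  mul_mem' := by
    intro a b ha hb v
    have : q (a (b v)) = q (b v) := ha (b v)
    exact this.trans (hb v)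
  inv_mem' := by
    intro a ha v
    conv_rhs => rw [← a.apply_symm_apply v]
    exact (ha (a⁻¹ v)).symm

/-- The special orthogonal group `SO₃(ℂ)`. -/
def SO3 : Subgroup ((Fin 3 → ℂ) ≃ₗ[ℂ] (Fin 3 → ℂ)) where
  carrier := {φ | (∀ v, q (φ v) = q v) ∧ LinearEquiv.det φ = 1}
  one_mem' := ⟨by intro v; rfl, map_one LinearEquiv.det⟩
  mul_mem' := by
    intro a b ha hb
    refine ⟨fun v => ((ha.1 (b v)).trans (hb.1 v)), ?_⟩
    rw [map_mul, ha.2, hb.2, one_mul]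
  inv_mem' := by
    intro a ha
    refine ⟨fun v => ?_, by rw [map_inv, ha.2, inv_one]⟩
    conv_rhs => rw [← a.apply_symm_apply v]
    exact (ha.1 (a⁻¹ v)).symm

/-- The diagonal embedding `GL(ℂ³) →* GL(ℂ³ ⊕ ℂ³)`. -/
def diag : ((Fin 3 → ℂ) ≃ₗ[ℂ] (Fin 3 → ℂ)) →*
    (((Fin 3 → ℂ) × (Fin 3 → ℂ)) ≃ₗ[ℂ] ((Fin 3 → ℂ) × (Fin 3 → ℂ))) :=
  MonoidHom.mk' (fun e => e.prodCongr e) (by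
    intro a b
    apply LinearEquiv.ext
    intro v
    rfl)


section Aux

abbrev V3 := Fin 3 → ℂ
abbrev VV := V3 × V3

/-! ### Bilinear form basics -/

def bfun (v w : V3) : ℂ := v 0 * w 0 + v 1 * w 1 + v 2 * w 2

lemma q_add (v w : V3) : q (v + w) = q v + 2 * bfun v w + q w := by
  simp [q, bfun]; ring

lemma q_neg' (v : V3) : q (-v) = q v := by simp [q]

lemma bfun_comm (v w : V3) : bfun v w = bfun w v := by simp [bfun]; ring

lemma bfun_sub_right (u a b : V3) : bfun u (a - b) = bfun u a - bfun u b := by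
  simp [bfun]; ring

lemma q_zero' : q 0 = 0 := by simp [q]

lemma bfun_single (v : V3) (j : Fin 3) : bfun v (Pi.single j 1) = v j := by
  fin_cases j <;> simp [bfun, Pi.single_apply]

lemma bfun_nondeg {v : V3} (h : ∀ w, bfun v w = 0) : v = 0 := by
  funext i
  have := h (Pi.single i 1)
  rw [bfun_single] at this
  simpa using this

lemma bfun_of_q_preserving {A : V3 →ₗ[ℂ] V3} (hA : ∀ v, q (A v) = q v) (v w : V3) :
    bfun (A v) (A w) = bfun v w := by
  have h1 : q (A v + A w) = q (v + w) := by rw [← map_add]; exact hA _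
  have h2 := q_add (A v) (A w)
  have h3 := q_add v w
  rw [hA, hA, h1, h3] at h2
  have : (2:ℂ) * bfun (A v) (A w) = 2 * bfun v w := by linear_combination -h2
  field_simp at this
  exact this

/-! ### Polynomial functions via MvPolynomial -/

def coordFun : (Fin 3 ⊕ Fin 3) → (VV → ℂ)
  | Sum.inl j => fun x => x.1 j
  | Sum.inr j => fun x => x.2 j

def evalFun : MvPolynomial (Fin 3 ⊕ Fin 3) ℂ →ₐ[ℂ] (VV → ℂ) := MvPolynomial.aeval coordFun

lemma evalFun_apply (P : MvPolynomial (Fin 3 ⊕ Fin 3) ℂ) (x : VV) :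
    evalFun P x = MvPolynomial.eval (fun i => coordFun i x) P := by
  have h : (Pi.evalAlgHom ℂ (fun _ : VV => ℂ) x).comp evalFun
      = MvPolynomial.aeval (fun i => coordFun i x) := by
    apply MvPolynomial.algHom_ext
    intro i
    simp [evalFun]
  have h2 := congrArg (fun φ => φ P) h
  simp only [AlgHom.comp_apply] at h2
  rw [show (Pi.evalAlgHom ℂ (fun _ : VV => ℂ) x) (evalFun P) = evalFun P x from rfl] at h2
  rw [h2, MvPolynomial.aeval_def, MvPolynomial.eval, Algebra.algebraMap_self]
  rfl

lemma evalFun_injective : Function.Injective evalFun := by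
  intro P Q h
  apply MvPolynomial.funext
  intro x
  have h2 := congrFun h (fun j => x (Sum.inl j), fun j => x (Sum.inr j))
  rw [evalFun_apply, evalFun_apply] at h2
  have hx : (fun i => coordFun i ((fun j => x (Sum.inl j), fun j => x (Sum.inr j)))) = x := by
    funext i; cases i <;> rfl
  rwa [hx] at h2

def bvec : (Fin 3 ⊕ Fin 3) → VV
  | Sum.inl j => (Pi.single j 1, 0)
  | Sum.inr j => (0, Pi.single j 1)

lemma sum_coord_bvec (x : VV) : ∑ i : Fin 3 ⊕ Fin 3, coordFun i x • bvec i = x := by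
  rw [Fintype.sum_sum_type]
  have h1 : ∀ j : Fin 3, coordFun (Sum.inl j) x • bvec (Sum.inl j)
      = ((Pi.single j (x.1 j) : V3), (0 : V3)) := by
    intro j
    have : x.1 j • (Pi.single j 1 : V3) = Pi.single j (x.1 j) := by
      rw [← Pi.single_smul, smul_eq_mul, mul_one]
    simp [coordFun, bvec, Prod.smul_mk, this]
  have h2 : ∀ j : Fin 3, coordFun (Sum.inr j) x • bvec (Sum.inr j)
      = ((0 : V3), (Pi.single j (x.2 j) : V3)) := by
    intro j
    have : x.2 j • (Pi.single j 1 : V3) = Pi.single j (x.2 j) := by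
      rw [← Pi.single_smul, smul_eq_mul, mul_one]
    simp [coordFun, bvec, Prod.smul_mk, this]
  simp only [h1, h2]
  rw [Prod.ext_iff]
  constructor
  · simp [Prod.fst_sum, Finset.univ_sum_single]
  · simp [Prod.snd_sum, Finset.univ_sum_single]

lemma exists_poly {f : VV → ℂ} (hf : IsPolyFun f) : ∃ P, evalFun P = f := by
  have hle : Algebra.adjoin ℂ (Set.range fun l : VV →ₗ[ℂ] ℂ => (l : VV → ℂ))
      ≤ evalFun.range := by
    rw [Algebra.adjoin_le_iff]
    rintro _ ⟨l, rfl⟩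
    rw [SetLike.mem_coe, AlgHom.mem_range]
    refine ⟨∑ i, MvPolynomial.C (l (bvec i)) * MvPolynomial.X i, ?_⟩
    funext x
    have lhs : evalFun (∑ i, MvPolynomial.C (l (bvec i)) * MvPolynomial.X i) x
        = ∑ i, l (bvec i) * coordFun i x := by
      rw [map_sum, Finset.sum_apply]
      refine Finset.sum_congr rfl fun i _ => ?_
      rw [map_mul]
      simp [evalFun, Pi.mul_apply]
    rw [lhs]
    show _ = l x
    conv_rhs => rw [← sum_coord_bvec x]
    rw [map_sum]
    exact Finset.sum_congr rfl fun i _ => by rw [map_smul, smul_eq_mul, mul_comm]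
  exact hle hf

/-! ### Closure properties of IsPolyFun, and the basic invariants -/

lemma isPolyFun_comp_linear {V : Type*} [AddCommGroup V] [Module ℂ V]
    {f : V → ℂ} (hf : IsPolyFun f) (L : V →ₗ[ℂ] V) :
    IsPolyFun (fun x => f (L x)) := by
  unfold IsPolyFun at hf ⊢
  induction hf using Algebra.adjoin_induction with
  | mem g hg =>
    obtain ⟨l, rfl⟩ := hg
    exact Algebra.subset_adjoin ⟨l ∘ₗ L, rfl⟩
  | algebraMap r =>
    exact Subalgebra.algebraMap_mem _ r
  | add g h _ _ hg hh =>
    exact Subalgebra.add_mem _ hg hh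
  | mul g h _ _ hg hh =>
    exact Subalgebra.mul_mem _ hg hh

lemma isPolyFun_sub {V : Type*} [AddCommGroup V] [Module ℂ V]
    {f g : V → ℂ} (hf : IsPolyFun f) (hg : IsPolyFun g) : IsPolyFun (f - g) :=
  Subalgebra.sub_mem _ hf hg

lemma isPolyFun_mul {V : Type*} [AddCommGroup V] [Module ℂ V]
    {f g : V → ℂ} (hf : IsPolyFun f) (hg : IsPolyFun g) : IsPolyFun (f * g) :=
  Subalgebra.mul_mem _ hf hg

lemma isPolyFun_add {V : Type*} [AddCommGroup V] [Module ℂ V]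
    {f g : V → ℂ} (hf : IsPolyFun f) (hg : IsPolyFun g) : IsPolyFun (f + g) :=
  Subalgebra.add_mem _ hf hg

lemma isPolyFun_coord1 (j : Fin 3) : IsPolyFun (fun x : VV => x.1 j) :=
  Algebra.subset_adjoin ⟨(LinearMap.proj j).comp (LinearMap.fst ℂ V3 V3), rfl⟩

lemma isPolyFun_coord2 (j : Fin 3) : IsPolyFun (fun x : VV => x.2 j) :=
  Algebra.subset_adjoin ⟨(LinearMap.proj j).comp (LinearMap.snd ℂ V3 V3), rfl⟩

lemma isPolyFun_q1 : IsPolyFun (fun x : VV => q x.1) := by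
  have : (fun x : VV => q x.1)
      = (fun x : VV => x.1 0) * (fun x : VV => x.1 0)
      + (fun x : VV => x.1 1) * (fun x : VV => x.1 1)
      + (fun x : VV => x.1 2) * (fun x : VV => x.1 2) := by
    funext x; simp [q]; ring
  rw [this]
  exact isPolyFun_add (isPolyFun_add (isPolyFun_mul (isPolyFun_coord1 0) (isPolyFun_coord1 0))
    (isPolyFun_mul (isPolyFun_coord1 1) (isPolyFun_coord1 1)))
    (isPolyFun_mul (isPolyFun_coord1 2) (isPolyFun_coord1 2))

lemma isPolyFun_q2 : IsPolyFun (fun x : VV => q x.2) := by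
  have : (fun x : VV => q x.2)
      = (fun x : VV => x.2 0) * (fun x : VV => x.2 0)
      + (fun x : VV => x.2 1) * (fun x : VV => x.2 1)
      + (fun x : VV => x.2 2) * (fun x : VV => x.2 2) := by
    funext x; simp [q]; ring
  rw [this]
  exact isPolyFun_add (isPolyFun_add (isPolyFun_mul (isPolyFun_coord2 0) (isPolyFun_coord2 0))
    (isPolyFun_mul (isPolyFun_coord2 1) (isPolyFun_coord2 1)))
    (isPolyFun_mul (isPolyFun_coord2 2) (isPolyFun_coord2 2))

lemma isPolyFun_bf : IsPolyFun (fun x : VV => bfun x.1 x.2) := by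
  have : (fun x : VV => bfun x.1 x.2)
      = (fun x : VV => x.1 0) * (fun x : VV => x.2 0)
      + (fun x : VV => x.1 1) * (fun x : VV => x.2 1)
      + (fun x : VV => x.1 2) * (fun x : VV => x.2 2) := by
    funext x; simp [bfun]
  rw [this]
  exact isPolyFun_add (isPolyFun_add (isPolyFun_mul (isPolyFun_coord1 0) (isPolyFun_coord2 0))
    (isPolyFun_mul (isPolyFun_coord1 1) (isPolyFun_coord2 1)))
    (isPolyFun_mul (isPolyFun_coord1 2) (isPolyFun_coord2 2))

def crossf (v w : V3) : V3 :=
  ![v 1 * w 2 - v 2 * w 1, v 2 * w 0 - v 0 * w 2, v 0 * w 1 - v 1 * w 0]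

def pf : VV → ℂ := fun x => q (crossf x.1 x.2)

lemma isPolyFun_pf : IsPolyFun pf := by
  have e : ∀ (a b : VV → ℂ), IsPolyFun a → IsPolyFun b → IsPolyFun ((a - b) * (a - b)) :=
    fun a b ha hb => isPolyFun_mul (isPolyFun_sub ha hb) (isPolyFun_sub ha hb)
  have : pf = ((fun x : VV => x.1 1) * (fun x => x.2 2) - (fun x : VV => x.1 2) * (fun x => x.2 1))
        * ((fun x : VV => x.1 1) * (fun x => x.2 2) - (fun x : VV => x.1 2) * (fun x => x.2 1))
      + ((fun x : VV => x.1 2) * (fun x => x.2 0) - (fun x : VV => x.1 0) * (fun x => x.2 2))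
        * ((fun x : VV => x.1 2) * (fun x => x.2 0) - (fun x : VV => x.1 0) * (fun x => x.2 2))
      + ((fun x : VV => x.1 0) * (fun x => x.2 1) - (fun x : VV => x.1 1) * (fun x => x.2 0))
        * ((fun x : VV => x.1 0) * (fun x => x.2 1) - (fun x : VV => x.1 1) * (fun x => x.2 0)) := by
    funext x; simp [pf, q, crossf]; ring
  rw [this]
  exact isPolyFun_add (isPolyFun_add
    (e _ _ (isPolyFun_mul (isPolyFun_coord1 1) (isPolyFun_coord2 2))
           (isPolyFun_mul (isPolyFun_coord1 2) (isPolyFun_coord2 1)))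
    (e _ _ (isPolyFun_mul (isPolyFun_coord1 2) (isPolyFun_coord2 0))
           (isPolyFun_mul (isPolyFun_coord1 0) (isPolyFun_coord2 2))))
    (e _ _ (isPolyFun_mul (isPolyFun_coord1 0) (isPolyFun_coord2 1))
           (isPolyFun_mul (isPolyFun_coord1 1) (isPolyFun_coord2 0)))

/-! ### The rotation by π about an anisotropic axis -/

def rotL (c : V3) : V3 →ₗ[ℂ] V3 where
  toFun x := fun i => 2 * bfun c x / q c * c i - x i
  map_add' x y := by funext i; simp [bfun]; ring
  map_smul' a x := by funext i; simp [bfun, smul_eq_mul]; ring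

lemma rot_invol {c : V3} (hk : q c ≠ 0) : Function.Involutive (rotL c) := by
  intro x
  have hk' : c 0 ^ 2 + c 1 ^ 2 + c 2 ^ 2 ≠ 0 := hk
  funext i
  fin_cases i <;>
    · show 2 * bfun c (rotL c x) / q c * c _ - rotL c x _ = x _
      simp only [rotL, LinearMap.coe_mk, AddHom.coe_mk, bfun, q]
      field_simp
      ring

lemma q_rot {c : V3} (hk : q c ≠ 0) (x : V3) : q (rotL c x) = q x := by
  have hk' : c 0 ^ 2 + c 1 ^ 2 + c 2 ^ 2 ≠ 0 := hk
  show q (fun i => 2 * bfun c x / q c * c i - x i) = q x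
  simp only [q, bfun]
  field_simp
  ring

lemma rot_neg {c v : V3} (h : bfun c v = 0) : rotL c v = -v := by
  funext i
  show 2 * bfun c v / q c * c i - v i = -v i
  rw [h]
  simp

lemma det_rotL {c : V3} (hk : q c ≠ 0) : LinearMap.det (rotL c) = 1 := by
  have hk' : c 0 ^ 2 + c 1 ^ 2 + c 2 ^ 2 ≠ 0 := hk
  have hs : 2 / q c * (c 0 ^ 2 + c 1 ^ 2 + c 2 ^ 2) = 2 := by
    show 2 / q c * q c = 2
    exact div_mul_cancel₀ 2 hk
  rw [← LinearMap.det_toMatrix (Pi.basisFun ℂ (Fin 3))]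
  have e : ∀ i j : Fin 3, LinearMap.toMatrix (Pi.basisFun ℂ (Fin 3)) (Pi.basisFun ℂ (Fin 3))
      (rotL c) i j = 2 / q c * c i * c j - (if i = j then 1 else 0) := by
    intro i j
    rw [LinearMap.toMatrix_apply]
    have hb : bfun c (Pi.basisFun ℂ (Fin 3) j) = c j := by
      fin_cases j <;> simp [bfun, Pi.basisFun_apply, Pi.single_apply]
    show (rotL c) ((Pi.basisFun ℂ (Fin 3)) j) i = _
    show 2 * bfun c ((Pi.basisFun ℂ (Fin 3)) j) / q c * c i - (Pi.basisFun ℂ (Fin 3)) j i = _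
    rw [hb]
    have h1 : 2 * c j / q c * c i = 2 / q c * c i * c j := by ring
    rw [h1]
    congr 1
    simp [Pi.basisFun_apply, Pi.single_apply, eq_comm]
  rw [Matrix.det_fin_three]
  simp only [e, Fin.reduceEq, reduceIte]
  norm_num
  linear_combination hs

def rotE (c : V3) (hk : q c ≠ 0) : V3 ≃ₗ[ℂ] V3 :=
  LinearEquiv.ofInvolutive (rotL c) (rot_invol hk)

lemma rotE_apply (c : V3) (hk : q c ≠ 0) (x : V3) : rotE c hk x = rotL c x := rfl

lemma rotE_mem_SO3 {c : V3} (hk : q c ≠ 0) : rotE c hk ∈ SO3 := by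
  refine ⟨fun v => ?_, ?_⟩
  · rw [rotE_apply]; exact q_rot hk v
  · apply Units.ext
    rw [LinearEquiv.coe_det]
    show LinearMap.det (rotL c) = 1
    exact det_rotL hk

lemma bfun_crossf_left (v w : V3) : bfun (crossf v w) v = 0 := by
  simp [bfun, crossf]; ring

lemma bfun_crossf_right (v w : V3) : bfun (crossf v w) w = 0 := by
  simp [bfun, crossf]; ring

lemma diag_apply (e : V3 ≃ₗ[ℂ] V3) (x : VV) : diag e x = (e x.1, e x.2) := rfl

/-! ### Central density argument: invariant polynomials are even -/

lemma neg_invariant {f : VV → ℂ} (hf : IsPolyFun f)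
    (hinv : ∀ g ∈ Subgroup.map diag SO3, ∀ v : VV, f (g v) = f v) (x : VV) :
    f (-x) = f x := by
  set Dfun : VV → ℂ := f - (fun y => f (-y)) with hD
  have hDpoly : IsPolyFun Dfun := by
    refine isPolyFun_sub hf ?_
    have h := isPolyFun_comp_linear hf (-(LinearMap.id : VV →ₗ[ℂ] VV))
    have : (fun y : VV => f (-y)) = fun y : VV => f ((-(LinearMap.id : VV →ₗ[ℂ] VV)) y) := by
      funext y; simp
    rw [this]
    exact h
  have hzero : ∀ y : VV, pf y * Dfun y = 0 := by
    intro y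
    by_cases hp : pf y = 0
    · rw [hp, zero_mul]
    · have hk : q (crossf y.1 y.2) ≠ 0 := hp
      have h1 : bfun (crossf y.1 y.2) y.1 = 0 := bfun_crossf_left _ _
      have h2 : bfun (crossf y.1 y.2) y.2 = 0 := bfun_crossf_right _ _
      have hmem : diag (rotE _ hk) ∈ Subgroup.map diag SO3 :=
        ⟨_, rotE_mem_SO3 hk, rfl⟩
      have hfy := hinv _ hmem y
      rw [diag_apply] at hfy
      rw [rotE_apply, rotE_apply, rot_neg h1, rot_neg h2] at hfy
      have hne : f (-y) = f y := by
        rw [← hfy]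
        congr 1
      have hDy : Dfun y = 0 := by
        show f y - f (-y) = 0
        rw [hne, sub_self]
      rw [hDy, mul_zero]
  obtain ⟨P, hP⟩ := exists_poly isPolyFun_pf
  obtain ⟨Q, hQ⟩ := exists_poly hDpoly
  have hPQ : evalFun (P * Q) = evalFun 0 := by
    rw [map_mul, hP, hQ, map_zero]
    funext y
    exact hzero y
  have hP0 : P ≠ 0 := by
    intro h0
    rw [h0, map_zero] at hP
    have h1 : pf ((![1,0,0] : V3), (![0,1,0] : V3)) = 0 := by
      rw [← hP]; rfl
    rw [show pf ((![1,0,0] : V3), (![0,1,0] : V3)) = 1 by norm_num [pf, q, crossf, Matrix.cons_val_two, Matrix.vecHead, Matrix.vecTail]] at h1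
    exact one_ne_zero h1
  have hQ0 : Q = 0 := by
    rcases mul_eq_zero.mp (evalFun_injective hPQ) with h | h
    · exact absurd h hP0
    · exact h
  have hDz : Dfun = 0 := by rw [← hQ, hQ0, map_zero]
  have hx := congrFun hDz x
  have : f x - f (-x) = 0 := hx
  rw [sub_eq_zero] at this
  exact this.symm

/-! ### det of an orthogonal equivalence is ±1 -/

lemma det_pm_one {g : V3 ≃ₗ[ℂ] V3} (hg : ∀ v, q (g v) = q v) :
    LinearMap.det (g : V3 →ₗ[ℂ] V3) = 1 ∨ LinearMap.det (g : V3 →ₗ[ℂ] V3) = -1 := by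
  set bs := Pi.basisFun ℂ (Fin 3)
  set M := LinearMap.toMatrix bs bs (g : V3 →ₗ[ℂ] V3) with hM
  have hb := bfun_of_q_preserving (A := (g : V3 →ₗ[ℂ] V3)) hg
  have hMk : ∀ k j, M k j = g (bs j) k := by
    intro k j
    rw [hM, LinearMap.toMatrix_apply]
    rw [show bs.repr ((g : V3 →ₗ[ℂ] V3) (bs j)) k = ((g : V3 →ₗ[ℂ] V3) (bs j)) k from
      Pi.basisFun_repr ℂ (Fin 3) _ k]
    rfl
  have hMt : M.transpose * M = 1 := by
    ext i j
    rw [Matrix.mul_apply]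
    simp only [Matrix.transpose_apply, hMk]
    rw [Fin.sum_univ_three]
    have hsum : g (bs i) 0 * g (bs j) 0 + g (bs i) 1 * g (bs j) 1 + g (bs i) 2 * g (bs j) 2
        = bfun ((g : V3 →ₗ[ℂ] V3) (bs i)) ((g : V3 →ₗ[ℂ] V3) (bs j)) := rfl
    rw [hsum, hb]
    fin_cases i <;> fin_cases j <;>
      simp [bs, bfun, Pi.basisFun_apply, Pi.single_apply, Matrix.one_apply]
  have hdet2 : M.det * M.det = 1 := by
    have := congrArg Matrix.det hMt
    rwa [Matrix.det_mul, Matrix.det_transpose, Matrix.det_one] at this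
  have := mul_self_eq_one_iff.mp hdet2
  rw [LinearMap.det_toMatrix bs] at this
  exact this

lemma mem_primeGroup_iff {φ : VV ≃ₗ[ℂ] VV} :
    φ ∈ primeGroup (Subgroup.map diag SO3) ↔ ∀ f : VV → ℂ, IsPolyFun f →
      (∀ g ∈ Subgroup.map diag SO3, ∀ v : VV, f (g v) = f v) → ∀ v : VV, f (φ v) = f v :=
  Iff.rfl

/-! ### The two inclusions -/

lemma backward {g : V3 ≃ₗ[ℂ] V3} (hg : g ∈ O3) :
    diag g ∈ primeGroup (Subgroup.map diag SO3) := by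
  rw [mem_primeGroup_iff]
  intro f hf hinv x
  have hgq : ∀ v, q (g v) = q v := hg
  rcases det_pm_one hgq with hd | hd
  · exact hinv (diag g) ⟨g, ⟨hgq, Units.ext (by rw [LinearEquiv.coe_det]; exact hd)⟩, rfl⟩ x
  · set h := g.trans (LinearEquiv.neg ℂ) with hh
    have happ : ∀ v, h v = -(g v) := fun v => rfl
    have hhq : ∀ v, q (h v) = q v := by
      intro v; rw [happ, q_neg']; exact hgq v
    have hdet : LinearEquiv.det h = 1 := by
      apply Units.ext
      rw [LinearEquiv.coe_det]
      have hcomp : (h : V3 →ₗ[ℂ] V3)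
          = (-(LinearMap.id : V3 →ₗ[ℂ] V3)) ∘ₗ (g : V3 →ₗ[ℂ] V3) := by
        ext v i
        simp [happ]
      rw [hcomp, LinearMap.det_comp]
      have hnid : LinearMap.det (-(LinearMap.id : V3 →ₗ[ℂ] V3)) = -1 := by
        rw [← LinearMap.det_toMatrix (Pi.basisFun ℂ (Fin 3)), map_neg,
          LinearMap.toMatrix_id, Matrix.det_neg, Matrix.det_one]
        norm_num
      rw [hnid, hd]
      norm_num
    have hmem : diag h ∈ Subgroup.map diag SO3 := ⟨h, ⟨hhq, hdet⟩, rfl⟩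
    have h1 := hinv (diag h) hmem x
    have h2 : diag h x = -(diag g x) := by
      rw [diag_apply, diag_apply, happ, happ]
      rfl
    rw [h2] at h1
    rw [← h1]
    exact (neg_invariant hf hinv (diag g x)).symm

lemma forward {φ : VV ≃ₗ[ℂ] VV} (hφ : φ ∈ primeGroup (Subgroup.map diag SO3)) :
    φ ∈ Subgroup.map diag O3 := by
  rw [mem_primeGroup_iff] at hφ
  have H1 : ∀ x : VV, q (φ x).1 = q x.1 := by
    refine hφ _ isPolyFun_q1 ?_
    rintro _ ⟨h, hh, rfl⟩ x
    exact hh.1 x.1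
  have H2 : ∀ x : VV, q (φ x).2 = q x.2 := by
    refine hφ _ isPolyFun_q2 ?_
    rintro _ ⟨h, hh, rfl⟩ x
    exact hh.1 x.2
  have H3 : ∀ x : VV, bfun (φ x).1 (φ x).2 = bfun x.1 x.2 := by
    refine hφ _ isPolyFun_bf ?_
    rintro _ ⟨h, hh, rfl⟩ x
    exact bfun_of_q_preserving (A := (h : V3 →ₗ[ℂ] V3)) hh.1 x.1 x.2
  set A : V3 →ₗ[ℂ] V3 :=
    (LinearMap.fst ℂ V3 V3) ∘ₗ (φ : VV →ₗ[ℂ] VV) ∘ₗ (LinearMap.inl ℂ V3 V3) with hA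
  set B : V3 →ₗ[ℂ] V3 :=
    (LinearMap.fst ℂ V3 V3) ∘ₗ (φ : VV →ₗ[ℂ] VV) ∘ₗ (LinearMap.inr ℂ V3 V3) with hB
  set C : V3 →ₗ[ℂ] V3 :=
    (LinearMap.snd ℂ V3 V3) ∘ₗ (φ : VV →ₗ[ℂ] VV) ∘ₗ (LinearMap.inl ℂ V3 V3) with hC
  set D : V3 →ₗ[ℂ] V3 :=
    (LinearMap.snd ℂ V3 V3) ∘ₗ (φ : VV →ₗ[ℂ] VV) ∘ₗ (LinearMap.inr ℂ V3 V3) with hD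
  have hsplit : ∀ v w : V3, φ (v, w) = (A v + B w, C v + D w) := by
    intro v w
    have hvw : ((v, w) : VV) = ((v, 0) : VV) + ((0, w) : VV) := by simp
    rw [hvw, map_add]
    rfl
  have hqA : ∀ v, q (A v) = q v := by
    intro v
    have := H1 (v, 0)
    rw [hsplit] at this
    simpa using this
  have hqB : ∀ w, q (B w) = 0 := by
    intro w
    have := H1 (0, w)
    rw [hsplit] at this
    simpa [q_zero'] using this
  have hAB : ∀ v w, bfun (A v) (B w) = 0 := by
    intro v w
    have h := H1 (v, w)
    rw [hsplit] at h
    simp only at h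
    rw [q_add, hqA, hqB] at h
    have h2 : (2:ℂ) * bfun (A v) (B w) = 0 := by linear_combination h
    exact (mul_eq_zero.mp h2).resolve_left two_ne_zero
  have hqD : ∀ w, q (D w) = q w := by
    intro w
    have := H2 (0, w)
    rw [hsplit] at this
    simpa using this
  have hqC : ∀ v, q (C v) = 0 := by
    intro v
    have := H2 (v, 0)
    rw [hsplit] at this
    simpa [q_zero'] using this
  have hCD : ∀ v w, bfun (C v) (D w) = 0 := by
    intro v w
    have h := H2 (v, w)
    rw [hsplit] at h
    simp only at h
    rw [q_add, hqC, hqD] at h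
    have h2 : (2:ℂ) * bfun (C v) (D w) = 0 := by linear_combination h
    exact (mul_eq_zero.mp h2).resolve_left two_ne_zero
  have hAinj : Function.Injective A := by
    intro a b hab
    have hAz : A (a - b) = 0 := by rw [map_sub, hab, sub_self]
    have hz : a - b = 0 := by
      apply bfun_nondeg
      intro w
      rw [← bfun_of_q_preserving hqA (a-b) w, hAz]
      simp [bfun]
    rw [sub_eq_zero] at hz
    exact hz
  have hAsurj : Function.Surjective A := (LinearMap.injective_iff_surjective).mp hAinj
  have hDinj : Function.Injective D := by
    intro a b hab
    have hDz : D (a - b) = 0 := by rw [map_sub, hab, sub_self]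
    have hz : a - b = 0 := by
      apply bfun_nondeg
      intro w
      rw [← bfun_of_q_preserving hqD (a-b) w, hDz]
      simp [bfun]
    rw [sub_eq_zero] at hz
    exact hz
  have hDsurj : Function.Surjective D := (LinearMap.injective_iff_surjective).mp hDinj
  have hB0 : ∀ w, B w = 0 := by
    intro w
    apply bfun_nondeg
    intro u
    obtain ⟨v, rfl⟩ := hAsurj u
    rw [bfun_comm]
    exact hAB v w
  have hC0 : ∀ v, C v = 0 := by
    intro v
    apply bfun_nondeg
    intro u
    obtain ⟨w, rfl⟩ := hDsurj u
    exact hCD v w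
  have hDA : ∀ w, D w = A w := by
    intro w
    have key : ∀ v, bfun (A v) (D w - A w) = 0 := by
      intro v
      rw [bfun_sub_right]
      have h := H3 (v, w)
      rw [hsplit] at h
      simp only at h
      rw [hB0, hC0, add_zero, zero_add] at h
      rw [h, bfun_of_q_preserving hqA v w, sub_self]
    have : D w - A w = 0 := by
      apply bfun_nondeg
      intro u
      obtain ⟨v, rfl⟩ := hAsurj u
      rw [bfun_comm]
      exact key v
    rw [sub_eq_zero] at this
    exact this
  set Aeq : V3 ≃ₗ[ℂ] V3 := LinearEquiv.ofBijective A ⟨hAinj, hAsurj⟩ with hAeq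
  refine ⟨Aeq, fun v => hqA v, ?_⟩
  apply LinearEquiv.toLinearMap_injective
  apply LinearMap.ext
  intro x
  show diag Aeq x = φ x
  rw [diag_apply]
  have : φ x = φ (x.1, x.2) := by rw [Prod.mk.eta]
  rw [this, hsplit, hB0, hC0, add_zero, zero_add, hDA]
  rfl

end Aux

/-- Let `G = SO₃(ℂ)` act diagonally on `V = 2R₂ = ℂ³ ⊕ ℂ³`.  Then
`G'` equals the image of `O₃(ℂ)` acting diagonally on `ℂ³ ⊕ ℂ³`. -/
theorem stmt15 : primeGroup (Subgroup.map diag SO3) = Subgroup.map diag O3 := by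
  ext φ
  constructor
  · exact forward
  · rintro ⟨g, hg, rfl⟩
    exact backward hg

end Stmt15
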